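/- Let r ≥ 1 be an integer. Then: (a) for every h ∈ K_H^{(r)}, one has t_n^{−r}·h·t_n^{r} ∈ K_n^{(2r)} ∩ K_n^{[r]} and (m·t_{n+1}^{r})^{−1}·diag(h,1)·(m·t_{n+1}^{r}) ∈ K_{n+1}^{(2r)} ∩ K_{n+1}^{[r]}; (b) for every ν ≥ 1, K_ν^{(2r)} ∩ K_ν^{[r]} ⊆ K_ν^{⟨r+1⟩}. -/

import Mathlib

open Matrix

noncomputable section

/-- `v` is a surjective discrete (additive) valuation on the field `F` with uniformizer `ϖ`,
with the convention `v 0 = ⊤`. -/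
def IsDVal {F : Type*} [Field F] (v : F → WithTop ℤ) (ϖ : F) : Prop :=
  (∀ x : F, v x = ⊤ ↔ x = 0) ∧
  (∀ x y : F, v (x * y) = v x + v y) ∧
  (∀ x y : F, min (v x) (v y) ≤ v (x + y)) ∧
  (∀ k : ℤ, ∃ x : F, v x = (k : WithTop ℤ)) ∧
  v ϖ = (1 : WithTop ℤ)

/-- `tMat ϖ ν r` is the integer power `t_ν^r` of the matrix `t_ν = diag(ϖ^{ν-1}, …, ϖ, 1)`. -/
def tMat {F : Type*} [Field F] (ϖ : F) (ν : ℕ) (r : ℤ) : Matrix (Fin ν) (Fin ν) F :=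
  Matrix.diagonal fun i => ϖ ^ (r * ((ν : ℤ) - 1 - ((i : ℕ) : ℤ)))

/-- The antidiagonal permutation matrix `w_ν` ((1-based) entries `1` iff `i + j = ν + 1`). -/
def wMat (F : Type*) [Field F] (ν : ℕ) : Matrix (Fin ν) (Fin ν) F :=
  Matrix.of fun i j => if (i : ℕ) + (j : ℕ) + 1 = ν then 1 else 0

/-- `GL_ν(𝒪)`: integral matrices with an integral two-sided inverse. -/
def GLO {F : Type*} [Field F] (v : F → WithTop ℤ) (ν : ℕ) : Set (Matrix (Fin ν) (Fin ν) F) :=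
  {g | (∀ i j, 0 ≤ v (g i j)) ∧
    ∃ g' : Matrix (Fin ν) (Fin ν) F, (∀ i j, 0 ≤ v (g' i j)) ∧ g * g' = 1 ∧ g' * g = 1}

/-- `N°_ν`: integral upper-triangular unipotent matrices. -/
def NO {F : Type*} [Field F] (v : F → WithTop ℤ) (ν : ℕ) : Set (Matrix (Fin ν) (Fin ν) F) :=
  {g | (∀ i j, 0 ≤ v (g i j)) ∧ (∀ i, g i i = 1) ∧ ∀ i j : Fin ν, j < i → g i j = 0}

/-- `N_ν(F)`: all upper-triangular unipotent matrices. -/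
def Nfull (F : Type*) [Field F] (ν : ℕ) : Set (Matrix (Fin ν) (Fin ν) F) :=
  {g | (∀ i, g i i = 1) ∧ ∀ i j : Fin ν, j < i → g i j = 0}

/-- The standard Iwahori subgroup `Iw_ν`. -/
def Iw {F : Type*} [Field F] (v : F → WithTop ℤ) (ν : ℕ) : Set (Matrix (Fin ν) (Fin ν) F) :=
  {g | g ∈ GLO v ν ∧ ∀ i j : Fin ν, j < i → (1 : WithTop ℤ) ≤ v (g i j)}

/-- `K_ν^{(r)} = GL_ν(𝒪) ∩ t_ν^{-r}·GL_ν(𝒪)·t_ν^{r}` (for any `r : ℤ`). -/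
def Kpar {F : Type*} [Field F] (v : F → WithTop ℤ) (ϖ : F) (ν : ℕ) (r : ℤ) :
    Set (Matrix (Fin ν) (Fin ν) F) :=
  {g | g ∈ GLO v ν ∧ tMat ϖ ν r * g * tMat ϖ ν (-r) ∈ GLO v ν}

/-- `K_ν^{⟨r⟩}`. -/
def KparAng {F : Type*} [Field F] (v : F → WithTop ℤ) (ϖ : F) (ν : ℕ) (r : ℤ) :
    Set (Matrix (Fin ν) (Fin ν) F) :=
  {g | g ∈ Kpar v ϖ ν r ∧ ∀ i, ((|r| - 1 : ℤ) : WithTop ℤ) ≤ v (g i i - 1)}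

/-- `K_ν^{[r]}`. -/
def KparSq {F : Type*} [Field F] (v : F → WithTop ℤ) (ϖ : F) (ν : ℕ) (r : ℤ) :
    Set (Matrix (Fin ν) (Fin ν) F) :=
  {g | g ∈ Kpar v ϖ ν r ∧ ∀ i, ((|r| : ℤ) : WithTop ℤ) ≤ v (g i i - 1)}

/-- A subset of a monoid is a subgroup. -/
def IsSubgrp {M : Type*} [Monoid M] (S : Set M) : Prop :=
  (1 : M) ∈ S ∧ (∀ a ∈ S, ∀ b ∈ S, a * b ∈ S) ∧ ∀ a ∈ S, ∃ b ∈ S, a * b = 1 ∧ b * a = 1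

/-- A standard deeper Iwahori subgroup: a subgroup `K ⊆ Iw_ν` with `K ∩ N_ν(F) = N°_ν`. -/
def IsStdDeeperIwahori {F : Type*} [Field F] (v : F → WithTop ℤ) (ν : ℕ)
    (K : Set (Matrix (Fin ν) (Fin ν) F)) : Prop :=
  IsSubgrp K ∧ K ⊆ Iw v ν ∧ K ∩ Nfull F ν = NO v ν

/-- The all-ones column vector of length `n`. -/
def uCol (F : Type*) [Field F] (n : ℕ) : Matrix (Fin n) (Fin 1) F :=
  Matrix.of fun _ _ => 1

/-- The twisting matrix `m = [[w_n, u],[0,1]]`. -/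
def mMat (F : Type*) [Field F] (n : ℕ) : Matrix (Fin (n + 1)) (Fin (n + 1)) F :=
  Matrix.reindex finSumFinEquiv finSumFinEquiv
    (Matrix.fromBlocks (wMat F n) (uCol F n) 0 (1 : Matrix (Fin 1) (Fin 1) F))

/-- Block-diagonal embedding `h ↦ diag(h, 1)`. -/
def dg1 {F : Type*} [Field F] {n : ℕ} (h : Matrix (Fin n) (Fin n) F) :
    Matrix (Fin (n + 1)) (Fin (n + 1)) F :=
  Matrix.reindex finSumFinEquiv finSumFinEquiv
    (Matrix.fromBlocks h 0 0 (1 : Matrix (Fin 1) (Fin 1) F))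

/-- The subgroup `K_H^{(r)} ⊆ GL_n(𝒪)`. -/
def KH {F : Type*} [Field F] (v : F → WithTop ℤ) (ϖ : F) (n : ℕ) (r : ℤ) :
    Set (Matrix (Fin n) (Fin n) F) :=
  {h | h ∈ GLO v n ∧ (∀ i j, 0 ≤ v ((tMat ϖ n (-r) * h * tMat ϖ n r) i j)) ∧
    (mMat F n)⁻¹ * dg1 h * mMat F n ∈ Kpar v ϖ (n + 1) (-r)}

/-- The double-coset set `K₁ · X₀ · K₂`. -/
def KXK {F : Type*} [Field F] {p q : ℕ} (K1 : Set (Matrix (Fin p) (Fin p) F))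
    (X0 : Matrix (Fin p) (Fin q) F) (K2 : Set (Matrix (Fin q) (Fin q) F)) :
    Set (Matrix (Fin p) (Fin q) F) :=
  {X | ∃ k ∈ K1, ∃ k' ∈ K2, X = k * X0 * k'}

/-- The antidiagonal rectangular matrix `X°` with `X°_{n+2-i, i} = ϖ^{λ_i}` (1-based indices)
and all other entries `0`. -/
def Xanti {F : Type*} [Field F] (ϖ : F) (n : ℕ) (lam : Fin n → ℤ) :
    Matrix (Fin (n + 1)) (Fin n) F :=
  Matrix.of fun r j => if (r : ℕ) + (j : ℕ) = n then ϖ ^ (lam j) else 0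

/-- `diag(ϖ^{λ_1}, …, ϖ^{λ_ν}) · w_ν`. -/
def Xdw {F : Type*} [Field F] (ϖ : F) (ν : ℕ) (lam : Fin ν → ℤ) : Matrix (Fin ν) (Fin ν) F :=
  Matrix.diagonal (fun i => ϖ ^ (lam i)) * wMat F ν

/-- The rectangular matrix `e_{n+1,n}` with upper `n×n` block the identity and zero last row. -/
def ePad (F : Type*) [Field F] (n : ℕ) : Matrix (Fin (n + 1)) (Fin n) F :=
  Matrix.of fun i j => if (i : ℕ) = (j : ℕ) then 1 else 0

/-- `λ_1 + ⋯ + λ_r`. -/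
def minorSum {n : ℕ} (lam : Fin n → ℤ) (r : ℕ) (hrn : r ≤ n) : ℤ :=
  ∑ i : Fin r, lam (Fin.castLE hrn i)

/-- Row indices of the Southwest-principal `r×r` minor: the last `r` rows. -/
def swRow (n r : ℕ) (hrn : r ≤ n) (i : Fin r) : Fin (n + 1) :=
  ⟨n + 1 - r + (i : ℕ), by have := i.isLt; omega⟩

/-- The Minor Condition (relative to fixed integers `λ_1 < ⋯ < λ_n`). -/
def MinorCond {F : Type*} [Field F] (v : F → WithTop ℤ) {n : ℕ} (lam : Fin n → ℤ)
    (X : Matrix (Fin (n + 1)) (Fin n) F) : Prop :=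
  ∀ r : ℕ, 1 ≤ r → ∀ hrn : r ≤ n,
    (∀ (f : Fin r → Fin (n + 1)) (g : Fin r → Fin n), StrictMono f → StrictMono g →
      ((minorSum lam r hrn : ℤ) : WithTop ℤ) ≤ v ((X.submatrix f g).det)) ∧
    v ((X.submatrix (swRow n r hrn) (Fin.castLE hrn)).det) = ((minorSum lam r hrn : ℤ) : WithTop ℤ)

/-- The Weak Minor Condition: Minor Condition restricted to anchored minors. -/
def WeakMinorCond {F : Type*} [Field F] (v : F → WithTop ℤ) {n : ℕ} (lam : Fin n → ℤ)
    (X : Matrix (Fin (n + 1)) (Fin n) F) : Prop :=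
  ∀ r : ℕ, 1 ≤ r → ∀ hrn : r ≤ n,
    (∀ (f : Fin r → Fin (n + 1)) (g : Fin r → Fin n), StrictMono f → StrictMono g →
      Fin.last n ∈ Set.range f →
      ((minorSum lam r hrn : ℤ) : WithTop ℤ) ≤ v ((X.submatrix f g).det)) ∧
    v ((X.submatrix (swRow n r hrn) (Fin.castLE hrn)).det) = ((minorSum lam r hrn : ℤ) : WithTop ℤ)

/-- Condition `Z(i)`: `X_{n+2-i', j} = 0` for all `1 ≤ i' ≤ i` and `i' < j ≤ n` (1-based). -/
def CondZ {F : Type*} [Field F] {n : ℕ} (X : Matrix (Fin (n + 1)) (Fin n) F) (i : ℕ) : Prop :=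
  ∀ i' j : ℕ, (h1 : 1 ≤ i') → (h2 : i' ≤ i) → (h3 : i' < j) → (h4 : j ≤ n) →
    X ⟨n + 1 - i', by omega⟩ ⟨j - 1, by omega⟩ = 0

/-- Condition `Z'(j)`: `X_{n+2-i, j'} = 0` for all `j + 1 ≤ j' < i ≤ n + 1` (1-based). -/
def CondZpr {F : Type*} [Field F] {n : ℕ} (X : Matrix (Fin (n + 1)) (Fin n) F) (j : ℕ) : Prop :=
  ∀ j' i : ℕ, (h1 : j + 1 ≤ j') → (h2 : j' < i) → (h3 : i ≤ n + 1) →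
    X ⟨n + 1 - i, by omega⟩ ⟨j' - 1, by omega⟩ = 0

/-- `h` is `s`-small. -/
def SSmall {F : Type*} [Field F] (v : F → WithTop ℤ) {n : ℕ} (s : ℤ)
    (h : Matrix (Fin n) (Fin n) F) : Prop :=
  (∀ i, v (h i i) = 0) ∧
  ∀ i j : Fin n, ((|((j : ℕ) : ℤ) - ((i : ℕ) : ℤ)| * s : ℤ) : WithTop ℤ) ≤ v (h i j)

/-- Block form `[[α, 0], [*, *]]` with `α` of size `i × i` lower triangular with diagonal
entries of valuation `0`. -/
def BlockLowUpTo {F : Type*} [Field F] (v : F → WithTop ℤ) {n : ℕ} (i : ℕ)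
    (h : Matrix (Fin n) (Fin n) F) : Prop :=
  (∀ a : Fin n, (a : ℕ) < i → v (h a a) = 0) ∧
  ∀ a b : Fin n, (a : ℕ) < i → (a : ℕ) < (b : ℕ) → h a b = 0

/-- `h` is upper-`s`-small up to row `i`. -/
def UpperSmallUpTo {F : Type*} [Field F] (v : F → WithTop ℤ) {n : ℕ} (s : ℤ) (i : ℕ)
    (h : Matrix (Fin n) (Fin n) F) : Prop :=
  ∃ hm hp : Matrix (Fin n) (Fin n) F, BlockLowUpTo v i hm ∧ SSmall v s hp ∧ h = hm * hp

/-- `h` is extremely `s`-small. -/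
def ExtrSmall {F : Type*} [Field F] (v : F → WithTop ℤ) {n : ℕ} (s : ℤ)
    (h : Matrix (Fin n) (Fin n) F) : Prop :=
  SSmall v s h ∧ Matrix.mulVec (wMat F n * h - 1) (fun _ => (1 : F)) = 0

/-- `h` is lower triangular with diagonal entries of valuation `0`. -/
def LowerUnitTri {F : Type*} [Field F] (v : F → WithTop ℤ) {n : ℕ}
    (h : Matrix (Fin n) (Fin n) F) : Prop :=
  (∀ a : Fin n, v (h a a) = 0) ∧ ∀ a b : Fin n, a < b → h a b = 0

/-- `h` is lower-`s`-small from column `j` (1-based `j`). -/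
def LowerSmallFrom {F : Type*} [Field F] (v : F → WithTop ℤ) {n : ℕ} (s : ℤ) (j : ℕ)
    (h : Matrix (Fin n) (Fin n) F) : Prop :=
  ∀ a b : Fin n, j ≤ (b : ℕ) + 1 → (b : ℕ) < (a : ℕ) →
    (((((a : ℕ) : ℤ) - ((b : ℕ) : ℤ)) * s : ℤ) : WithTop ℤ) ≤ v (h a b)

/-- Block form `[[α₋, 0], [*, 1]]` with `α₋` of size `(j-1) × (j-1)` lower triangular with
diagonal entries of valuation `0`, and lower-right identity block (1-based `j`). -/
def BlockLowFrom {F : Type*} [Field F] (v : F → WithTop ℤ) {n : ℕ} (j : ℕ)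
    (h : Matrix (Fin n) (Fin n) F) : Prop :=
  (∀ a : Fin n, (a : ℕ) < j - 1 → v (h a a) = 0) ∧
  (∀ a b : Fin n, (a : ℕ) < j - 1 → (a : ℕ) < (b : ℕ) → h a b = 0) ∧
  ∀ a b : Fin n, j - 1 ≤ (a : ℕ) → j - 1 ≤ (b : ℕ) → h a b = if a = b then 1 else 0

/-- The action `X ._s h := diag(t_n^{-s} h^{-w} t_n^{s}, 1) · X · (t_n^{-s} h t_n^{s})`. -/
def actS {F : Type*} [Field F] (ϖ : F) {n : ℕ} (s : ℤ) (X : Matrix (Fin (n + 1)) (Fin n) F)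
    (h : Matrix (Fin n) (Fin n) F) : Matrix (Fin (n + 1)) (Fin n) F :=
  dg1 (tMat ϖ n (-s) * (wMat F n * h⁻¹ * (wMat F n)⁻¹) * tMat ϖ n s) * X *
    (tMat ϖ n (-s) * h * tMat ϖ n s)

/-- The residue field `𝒪/(ϖ)` has cardinality `q`. -/
def ResidueCard {F : Type*} [Field F] (v : F → WithTop ℤ) (q : ℕ) : Prop :=
  ∃ R : Finset F, R.card = q ∧ (∀ x ∈ R, 0 ≤ v x) ∧
    ∀ x : F, 0 ≤ v x → ∃! y, y ∈ R ∧ (1 : WithTop ℤ) ≤ v (x - y)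

/-- `H` has index `k` in `G`: there is a transversal of cardinality `k`. -/
def IndexEq {M : Type*} [Monoid M] (H G : Set M) (k : ℕ) : Prop :=
  ∃ T : Finset M, T.card = k ∧ ↑T ⊆ G ∧ ∀ g ∈ G, ∃! t, t ∈ T ∧ ∃ h ∈ H, g = h * t

def cExp (ν : ℕ) : ℕ := (ν - 1) * ν * (ν + 1) / 6

def dExp (n : ℕ) : ℕ := n * (n + 1) * (2 * n + 1) / 6

/-- The block matrix `B = [[1_n, u],[0,1]]`. -/
def BMat (F : Type*) [Field F] (n : ℕ) : Matrix (Fin (n + 1)) (Fin (n + 1)) F :=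
  Matrix.reindex finSumFinEquiv finSumFinEquiv
    (Matrix.fromBlocks (1 : Matrix (Fin n) (Fin n) F) (uCol F n) 0 (1 : Matrix (Fin 1) (Fin 1) F))

/-- The group `G = GL_n(F) × GL_{n+1}(F)` (as a matrix pair monoid). -/
abbrev GPair (F : Type*) [Field F] (n : ℕ) :=
  Matrix (Fin n) (Fin n) F × Matrix (Fin (n + 1)) (Fin (n + 1)) F

def tPair {F : Type*} [Field F] (ϖ : F) (n : ℕ) : GPair F n :=
  (tMat ϖ n 1, tMat ϖ (n + 1) 1)

def tPairInv {F : Type*} [Field F] (ϖ : F) (n : ℕ) : GPair F n :=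
  (tMat ϖ n (-1), tMat ϖ (n + 1) (-1))

/-- `m_s = (t_n^s, m·t_{n+1}^s)`. -/
def mPair {F : Type*} [Field F] (ϖ : F) (n : ℕ) (s : ℤ) : GPair F n :=
  (tMat ϖ n s, mMat F n * tMat ϖ (n + 1) s)

/-- `ι(h) = (h, diag(h,1))`. -/
def iotaPair {F : Type*} [Field F] {n : ℕ} (h : Matrix (Fin n) (Fin n) F) : GPair F n :=
  (h, dg1 h)

def NOPair {F : Type*} [Field F] (v : F → WithTop ℤ) (n : ℕ) : Set (GPair F n) :=
  {p | p.1 ∈ NO v n ∧ p.2 ∈ NO v (n + 1)}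

def KAngPair {F : Type*} [Field F] (v : F → WithTop ℤ) (ϖ : F) (n : ℕ) (r : ℤ) :
    Set (GPair F n) :=
  {p | p.1 ∈ KparAng v ϖ n r ∧ p.2 ∈ KparAng v ϖ (n + 1) r}

/-- The left coset `g · K`. -/
def lCoset {M : Type*} [Mul M] (g : M) (K : Set M) : Set M := (g * ·) '' K

namespace St11

variable {F : Type*} [Field F] {v : F → WithTop ℤ} {ϖ : F}

lemma pi_ne (h : IsDVal v ϖ) : ϖ ≠ 0 := by
  intro e
  have h1 : v ϖ = ⊤ := (h.1 ϖ).2 e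
  rw [h.2.2.2.2] at h1
  exact (WithTop.coe_ne_top (a := (1:ℤ))) (by exact_mod_cast h1)

lemma v_zero (h : IsDVal v ϖ) : v 0 = ⊤ := (h.1 0).2 rfl

lemma v_ne_top (h : IsDVal v ϖ) {x : F} (hx : x ≠ 0) : v x ≠ ⊤ :=
  fun e => hx ((h.1 x).1 e)

lemma v_one (h : IsDVal v ϖ) : v 1 = 0 := by
  have h1 : v 1 = v 1 + v 1 := by
    conv_lhs => rw [show (1:F) = 1 * 1 by ring, h.2.1]
  obtain ⟨k, hk⟩ := WithTop.ne_top_iff_exists.1 (v_ne_top h (one_ne_zero (α := F)))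
  rw [← hk, ← WithTop.coe_add, WithTop.coe_inj] at h1
  rw [← hk, show k = 0 by omega, WithTop.coe_zero]

lemma v_neg (h : IsDVal v ϖ) (x : F) : v (-x) = v x := by
  have hm : v (-1 : F) = 0 := by
    have h1 : v (1:F) = v (-1:F) + v (-1:F) := by
      conv_lhs => rw [show (1:F) = (-1) * (-1) by ring, h.2.1]
    rw [v_one h] at h1
    obtain ⟨k, hk⟩ := WithTop.ne_top_iff_exists.1
      (v_ne_top h (neg_ne_zero.2 (one_ne_zero (α := F))))
    rw [← hk, ← WithTop.coe_add, ← WithTop.coe_zero, WithTop.coe_inj] at h1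
    rw [← hk, show k = 0 by omega, WithTop.coe_zero]
  rw [show -x = (-1) * x by ring, h.2.1, hm, zero_add]

lemma v_mul_cancel (h : IsDVal v ϖ) {x y : F} (hx : x * y = 1) (hvx : v x = 0) :
    v y = 0 := by
  have := h.2.1 x y
  rw [hx, v_one h, hvx, zero_add] at this
  exact this.symm

lemma v_zpow (h : IsDVal v ϖ) (k : ℤ) : v (ϖ ^ k) = (k : WithTop ℤ) := by
  have hne := pi_ne h
  have hinv : v ϖ⁻¹ = ((-1 : ℤ) : WithTop ℤ) := by
    have h1 : (0 : WithTop ℤ) = 1 + v ϖ⁻¹ := by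
      rw [← h.2.2.2.2, ← h.2.1, mul_inv_cancel₀ hne, v_one h]
    obtain ⟨k, hk⟩ := WithTop.ne_top_iff_exists.1 (v_ne_top h (inv_ne_zero hne))
    rw [← hk] at h1 ⊢
    rw [show (1 : WithTop ℤ) = ((1:ℤ) : WithTop ℤ) by norm_cast, ← WithTop.coe_add,
      ← WithTop.coe_zero, WithTop.coe_inj] at h1
    rw [WithTop.coe_inj]; omega
  induction k using Int.induction_on with
  | zero => rw [zpow_zero, v_one h]; norm_cast
  | succ i ih =>
      rw [zpow_add_one₀ hne, h.2.1, ih, h.2.2.2.2,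
        show (1 : WithTop ℤ) = ((1:ℤ) : WithTop ℤ) by norm_cast, ← WithTop.coe_add]
  | pred i ih =>
      rw [show (-(i:ℤ) - 1) = (-(i:ℤ)) + (-1) by ring, zpow_add₀ hne, h.2.1, ih,
        _root_.zpow_neg_one, hinv, ← WithTop.coe_add]

lemma v_sum (h : IsDVal v ϖ) {ι : Type*} (s : Finset ι) (f : ι → F) (c : WithTop ℤ)
    (hf : ∀ i ∈ s, c ≤ v (f i)) : c ≤ v (∑ i ∈ s, f i) := by
  classical
  induction s using Finset.induction_on with
  | empty => rw [Finset.sum_empty, v_zero h]; exact le_top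
  | insert a s hnot ih =>
      rw [Finset.sum_insert hnot]
      refine le_trans ?_ (h.2.2.1 _ _)
      exact le_min (hf a (Finset.mem_insert_self a s))
        (ih fun i hi => hf i (Finset.mem_insert_of_mem hi))

lemma v_add (h : IsDVal v ϖ) {x y : F} {c : WithTop ℤ} (hx : c ≤ v x) (hy : c ≤ v y) :
    c ≤ v (x + y) := le_trans (le_min hx hy) (h.2.2.1 x y)

lemma v_sub (h : IsDVal v ϖ) {x y : F} {c : WithTop ℤ} (hx : c ≤ v x) (hy : c ≤ v y) :
    c ≤ v (x - y) := by
  rw [sub_eq_add_neg]; exact v_add h hx (by rw [v_neg h]; exact hy)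

lemma v_prod (h : IsDVal v ϖ) {ι : Type*} (s : Finset ι) (f : ι → F) (c : ι → ℤ)
    (hf : ∀ i ∈ s, ((c i : ℤ) : WithTop ℤ) ≤ v (f i)) :
    ((∑ i ∈ s, c i : ℤ) : WithTop ℤ) ≤ v (∏ i ∈ s, f i) := by
  classical
  induction s using Finset.induction_on with
  | empty => rw [Finset.sum_empty, Finset.prod_empty, v_one h]; norm_cast
  | insert a s hnot ih =>
      rw [Finset.sum_insert hnot, Finset.prod_insert hnot, h.2.1, WithTop.coe_add]
      exact add_le_add (hf a (Finset.mem_insert_self a s))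
        (ih fun i hi => hf i (Finset.mem_insert_of_mem hi))


lemma v_sign_smul (h : IsDVal v ϖ) (ε : ℤˣ) (x : F) : v (ε • x) = v x := by
  rcases Int.units_eq_one_or ε with he | he <;> subst he
  · simp
  · rw [Units.smul_def]; norm_num; exact v_neg h x

lemma v_det_ge (h : IsDVal v ϖ) {ν : ℕ} (g : Matrix (Fin ν) (Fin ν) F) (c : WithTop ℤ)
    (hterm : ∀ σ : Equiv.Perm (Fin ν), c ≤ v (∏ l, g (σ l) l)) : c ≤ v g.det := by
  rw [Matrix.det_apply]
  exact v_sum h _ _ _ fun σ _ => by rw [v_sign_smul h]; exact hterm σ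

lemma v_det_nonneg (h : IsDVal v ϖ) {ν : ℕ} (g : Matrix (Fin ν) (Fin ν) F)
    (hg : ∀ a b, 0 ≤ v (g a b)) : 0 ≤ v g.det := by
  refine v_det_ge h g 0 fun σ => ?_
  have := v_prod h Finset.univ (fun l => g (σ l) l) (fun _ => 0)
    (fun i _ => by simpa using hg _ _)
  simpa using this

lemma v_adjugate (h : IsDVal v ϖ) {ν : ℕ} (r : ℤ) (hr : 0 ≤ r)
    (g : Matrix (Fin ν) (Fin ν) F)
    (hg : ∀ a b : Fin ν, ((r * |(a : ℤ) - (b : ℤ)| : ℤ) : WithTop ℤ) ≤ v (g a b))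
    (a b : Fin ν) :
    ((r * |(a : ℤ) - (b : ℤ)| : ℤ) : WithTop ℤ) ≤ v (g.adjugate a b) := by
  classical
  rw [Matrix.adjugate_apply]
  refine v_det_ge h _ _ fun σ => ?_
  by_cases hσ : σ a = b
  · have hparse : ∏ l, (g.updateRow b (Pi.single a 1)) (σ l) l
        = ∏ l ∈ Finset.univ.erase a, g (σ l) l := by
      rw [← Finset.mul_prod_erase Finset.univ _ (Finset.mem_univ a)]
      rw [Matrix.updateRow_apply, if_pos hσ, Pi.single_eq_same, one_mul]
      refine Finset.prod_congr rfl fun l hl => ?_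
      rw [Matrix.updateRow_apply, if_neg]
      intro e
      exact (Finset.mem_erase.1 hl).1 (σ.injective (e.trans hσ.symm))
    rw [hparse]
    have hsum0 : ∑ l : Fin ν, ((σ l : ℤ) - (l : ℤ)) = 0 := by
      rw [Finset.sum_sub_distrib, Equiv.sum_comp σ (fun l : Fin ν => (l : ℤ)), sub_self]
    have hsumer : ∑ l ∈ Finset.univ.erase a, ((σ l : ℤ) - (l : ℤ)) = (a : ℤ) - (b : ℤ) := by
      have h5 : ((σ a : ℤ) - (a : ℤ)) + ∑ l ∈ Finset.univ.erase a, ((σ l : ℤ) - (l : ℤ)) = 0 := by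
        have := Finset.add_sum_erase Finset.univ (fun l : Fin ν => ((σ l : ℤ) - (l : ℤ)))
          (Finset.mem_univ a)
        rw [hsum0] at this
        exact this
      rw [hσ] at h5
      omega
    have hint : r * |(a : ℤ) - (b : ℤ)| ≤ ∑ l ∈ Finset.univ.erase a, r * |(σ l : ℤ) - (l : ℤ)| := by
      rw [← Finset.mul_sum]
      refine mul_le_mul_of_nonneg_left ?_ hr
      calc |(a : ℤ) - (b : ℤ)| = |∑ l ∈ Finset.univ.erase a, ((σ l : ℤ) - (l : ℤ))| := by
            rw [hsumer]
        _ ≤ ∑ l ∈ Finset.univ.erase a, |(σ l : ℤ) - (l : ℤ)| := Finset.abs_sum_le_sum_abs _ _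
    refine le_trans (WithTop.coe_le_coe.2 hint) ?_
    exact v_prod h _ _ _ fun l _ => hg _ _
  · have hzero : ∏ l, (g.updateRow b (Pi.single a 1)) (σ l) l = 0 := by
      refine Finset.prod_eq_zero (Finset.mem_univ (σ.symm b)) ?_
      rw [Matrix.updateRow_apply, if_pos (σ.apply_symm_apply b), Pi.single_apply, if_neg]
      intro e
      exact hσ (by rw [← e, σ.apply_symm_apply])
    rw [hzero, v_zero h]
    exact le_top

lemma v_inv_bound (h : IsDVal v ϖ) {ν : ℕ} (r : ℤ) (hr : 0 ≤ r)
    (g g' : Matrix (Fin ν) (Fin ν) F)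
    (hg : ∀ a b : Fin ν, ((r * |(a : ℤ) - (b : ℤ)| : ℤ) : WithTop ℤ) ≤ v (g a b))
    (hg' : ∀ a b : Fin ν, 0 ≤ v (g' a b))
    (h1 : g * g' = 1) (h2 : g' * g = 1) (a b : Fin ν) :
    ((r * |(a : ℤ) - (b : ℤ)| : ℤ) : WithTop ℤ) ≤ v (g' a b) := by
  have hg0 : ∀ a b : Fin ν, 0 ≤ v (g a b) := fun a b =>
    le_trans (by exact_mod_cast mul_nonneg hr (abs_nonneg _)) (hg a b)
  have hd1 : 0 ≤ v g.det := v_det_nonneg h g hg0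
  have hd2 : 0 ≤ v g'.det := v_det_nonneg h g' hg'
  have hdm : v g.det + v g'.det = 0 := by
    rw [← h.2.1, ← Matrix.det_mul, h1, Matrix.det_one, v_one h]
  have hvd : v g.det = 0 := by
    have h3 : v g.det ≤ 0 := by
      calc v g.det = v g.det + 0 := (add_zero _).symm
        _ ≤ v g.det + v g'.det := add_le_add le_rfl hd2
        _ = 0 := hdm
    exact le_antisymm h3 hd1
  have hdet_ne : g.det ≠ 0 := fun e => by
    rw [e, v_zero h] at hvd; exact (WithTop.top_ne_zero hvd)
  have hginv : g' = g⁻¹ := (Matrix.inv_eq_right_inv h1).symm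
  have hentry : g' a b = (g.det)⁻¹ * g.adjugate a b := by
    rw [hginv, Matrix.inv_def, Matrix.smul_apply, Ring.inverse_eq_inv', smul_eq_mul]
  have hvinv : v (g.det)⁻¹ = 0 :=
    v_mul_cancel h (mul_inv_cancel₀ hdet_ne) hvd
  rw [hentry, h.2.1, hvinv, zero_add]
  exact v_adjugate h r hr g hg a b

/-! ### Matrix helper lemmas -/

lemma conj_mul_one {ν : ℕ} (Dm Dinv X Y : Matrix (Fin ν) (Fin ν) F)
    (hD : Dm * Dinv = 1) (hDi : Dinv * Dm = 1) (hXY : X * Y = 1) :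
    (Dinv * X * Dm) * (Dinv * Y * Dm) = 1 := by
  simp only [← Matrix.mul_assoc]
  rw [Matrix.mul_assoc (Dinv * X) Dm Dinv, hD, Matrix.mul_one,
    Matrix.mul_assoc Dinv X Y, hXY, Matrix.mul_one, hDi]

lemma tMat_mul (h : IsDVal v ϖ) (ν : ℕ) (s s' : ℤ) :
    tMat ϖ ν s * tMat ϖ ν s' = tMat ϖ ν (s + s') := by
  unfold tMat
  rw [Matrix.diagonal_mul_diagonal]
  have he : (fun i : Fin ν => ϖ ^ (s * ((ν:ℤ) - 1 - ((i:ℕ):ℤ))) * ϖ ^ (s' * ((ν:ℤ) - 1 - ((i:ℕ):ℤ))))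
      = fun i : Fin ν => ϖ ^ ((s + s') * ((ν:ℤ) - 1 - ((i:ℕ):ℤ))) := by
    funext i; rw [← zpow_add₀ (pi_ne h)]; congr 1; ring
  rw [he]

lemma tMat_zero (ν : ℕ) : tMat ϖ ν 0 = (1 : Matrix (Fin ν) (Fin ν) F) := by
  unfold tMat
  simp

lemma tMat_inv (h : IsDVal v ϖ) (ν : ℕ) (s : ℤ) : (tMat ϖ ν s)⁻¹ = tMat ϖ ν (-s) :=
  Matrix.inv_eq_right_inv (by rw [tMat_mul h, show s + -s = 0 by ring, tMat_zero])

lemma sandwich (h : IsDVal v ϖ) (k l : ℤ) (hkl : k + l = 0) (x : F) :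
    ϖ ^ k * x * ϖ ^ l = x := by
  rw [mul_comm (ϖ ^ k) x, mul_assoc, ← zpow_add₀ (pi_ne h), hkl, zpow_zero, mul_one]

lemma v_elem (h : IsDVal v ϖ) (c : ℤ) (x : F) (k : ℤ) :
    ((k : ℤ) : WithTop ℤ) ≤ v (ϖ ^ c * x) ↔ ((k - c : ℤ) : WithTop ℤ) ≤ v x := by
  rw [h.2.1, v_zpow h]
  cases hx : v x using WithTop.recTopCoe with
  | top => simp
  | coe m =>
      rw [← WithTop.coe_add, WithTop.coe_le_coe, WithTop.coe_le_coe]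
      omega

lemma v_mono (k k' : ℤ) (x : F) (hk : k ≤ k') (hx : ((k' : ℤ) : WithTop ℤ) ≤ v x) :
    ((k : ℤ) : WithTop ℤ) ≤ v x := le_trans (WithTop.coe_le_coe.2 hk) hx

lemma tgt_apply (h : IsDVal v ϖ) {ν : ℕ} (g : Matrix (Fin ν) (Fin ν) F) (s s' : ℤ)
    (i j : Fin ν) :
    (tMat ϖ ν s * g * tMat ϖ ν s') i j
      = ϖ ^ (s * ((ν:ℤ) - 1 - ((i:ℕ):ℤ)) + s' * ((ν:ℤ) - 1 - ((j:ℕ):ℤ))) * g i j := by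
  unfold tMat
  rw [Matrix.mul_diagonal, Matrix.diagonal_mul, zpow_add₀ (pi_ne h)]
  ring

lemma wMat_apply (n : ℕ) (i j : Fin n) :
    wMat F n i j = if i = Fin.rev j then 1 else 0 := by
  unfold wMat
  rw [Matrix.of_apply]
  refine if_congr ?_ rfl rfl
  rw [Fin.ext_iff, Fin.val_rev]
  have := i.isLt; have := j.isLt
  omega

lemma w_mul_apply {n : ℕ} {κ : Type*} [Fintype κ] (A : Matrix (Fin n) κ F) (i : Fin n)
    (j : κ) : (wMat F n * A) i j = A (Fin.rev i) j := by
  rw [Matrix.mul_apply]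
  have : ∀ k : Fin n, wMat F n i k * A k j = if k = Fin.rev i then A k j else 0 := by
    intro k
    rw [wMat_apply, ite_mul, one_mul, zero_mul]
    refine if_congr ?_ rfl rfl
    rw [Fin.ext_iff, Fin.ext_iff, Fin.val_rev, Fin.val_rev]
    have := i.isLt; have := k.isLt
    omega
  rw [Finset.sum_congr rfl fun k _ => this k, Finset.sum_ite_eq' Finset.univ (Fin.rev i)]
  exact if_pos (Finset.mem_univ _)

lemma mul_w_apply {n : ℕ} {κ : Type*} [Fintype κ] (A : Matrix κ (Fin n) F) (i : κ)
    (j : Fin n) : (A * wMat F n) i j = A i (Fin.rev j) := by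
  rw [Matrix.mul_apply]
  have : ∀ k : Fin n, A i k * wMat F n k j = if k = Fin.rev j then A i k else 0 := by
    intro k
    rw [wMat_apply, mul_ite, mul_one, mul_zero]
  rw [Finset.sum_congr rfl fun k _ => this k, Finset.sum_ite_eq' Finset.univ (Fin.rev j)]
  exact if_pos (Finset.mem_univ _)

lemma w_mul_w (n : ℕ) : wMat F n * wMat F n = (1 : Matrix (Fin n) (Fin n) F) := by
  ext i j
  rw [w_mul_apply, wMat_apply, Matrix.one_apply]
  exact if_congr Fin.rev_inj rfl rfl

lemma whw_apply {n : ℕ} (A : Matrix (Fin n) (Fin n) F) (i j : Fin n) :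
    (wMat F n * A * wMat F n) i j = A (Fin.rev i) (Fin.rev j) := by
  rw [mul_w_apply, w_mul_apply]

lemma w_mul_u (n : ℕ) : wMat F n * uCol F n = uCol F n := by
  ext i c
  rw [w_mul_apply]
  simp [uCol]

lemma whu_apply {n : ℕ} (A : Matrix (Fin n) (Fin n) F) (i : Fin n) (c : Fin 1) :
    (wMat F n * A * uCol F n) i c = ∑ k, A (Fin.rev i) k := by
  rw [Matrix.mul_apply]
  refine Finset.sum_congr rfl fun k _ => ?_
  rw [w_mul_apply]
  exact mul_one _

/-! ### Reindex / block lemmas -/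

lemma re_mul {n : ℕ} (A B : Matrix (Fin n ⊕ Fin 1) (Fin n ⊕ Fin 1) F) :
    Matrix.reindex finSumFinEquiv finSumFinEquiv A
        * Matrix.reindex finSumFinEquiv finSumFinEquiv B
      = Matrix.reindex finSumFinEquiv finSumFinEquiv (A * B) := by
  simp only [Matrix.reindex_apply]
  exact Matrix.submatrix_mul_equiv A B _ finSumFinEquiv.symm _

lemma re_one {n : ℕ} :
    Matrix.reindex finSumFinEquiv finSumFinEquiv
      (1 : Matrix (Fin n ⊕ Fin 1) (Fin n ⊕ Fin 1) F) = 1 := by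
  simp only [Matrix.reindex_apply]
  exact Matrix.submatrix_one_equiv finSumFinEquiv.symm

def DDm (ϖ : F) (n : ℕ) (s : ℤ) : Matrix (Fin n) (Fin n) F :=
  Matrix.diagonal fun a : Fin n => ϖ ^ (s * ((n:ℤ) - ((a:ℕ):ℤ)))

lemma DDm_mul (h : IsDVal v ϖ) {n : ℕ} (s s' : ℤ) :
    DDm ϖ n s * DDm ϖ n s' = DDm ϖ n (s + s') := by
  unfold DDm
  rw [Matrix.diagonal_mul_diagonal]
  have he : (fun i : Fin n => ϖ ^ (s * ((n:ℤ) - ((i:ℕ):ℤ))) * ϖ ^ (s' * ((n:ℤ) - ((i:ℕ):ℤ))))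
      = fun i : Fin n => ϖ ^ ((s + s') * ((n:ℤ) - ((i:ℕ):ℤ))) := by
    funext i; rw [← zpow_add₀ (pi_ne h)]; congr 1; ring
  rw [he]

lemma DDm_zero {n : ℕ} : DDm ϖ n 0 = (1 : Matrix (Fin n) (Fin n) F) := by
  unfold DDm
  simp

lemma dgd_apply (h : IsDVal v ϖ) {n : ℕ} (g : Matrix (Fin n) (Fin n) F) (s s' : ℤ)
    (i j : Fin n) :
    (DDm ϖ n s * g * DDm ϖ n s') i j
      = ϖ ^ (s * ((n:ℤ) - ((i:ℕ):ℤ)) + s' * ((n:ℤ) - ((j:ℕ):ℤ))) * g i j := by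
  unfold DDm
  rw [Matrix.mul_diagonal, Matrix.diagonal_mul, zpow_add₀ (pi_ne h)]
  ring

lemma dq_apply {n : ℕ} (s : ℤ) (q : Matrix (Fin n) (Fin 1) F) (i : Fin n) (d : Fin 1) :
    (DDm ϖ n s * q) i d = ϖ ^ (s * ((n:ℤ) - ((i:ℕ):ℤ))) * q i d := by
  unfold DDm
  rw [Matrix.diagonal_mul]

lemma glo_entry (h : IsDVal v ϖ) (c k : ℤ) (x : F) (hk : 0 ≤ k + c)
    (hx : ((k : ℤ) : WithTop ℤ) ≤ v x) : 0 ≤ v (ϖ ^ c * x) := by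
  have h1 : ((k + c - c : ℤ) : WithTop ℤ) ≤ v x := v_mono _ _ _ (le_of_eq (by ring)) hx
  have h2 := (v_elem h c x (k + c)).2 h1
  exact le_trans (by exact_mod_cast hk) h2

lemma tMat_block {n : ℕ} (s : ℤ) :
    tMat ϖ (n+1) s = Matrix.reindex finSumFinEquiv finSumFinEquiv
      (Matrix.fromBlocks (DDm ϖ n s) 0 0
        (1 : Matrix (Fin 1) (Fin 1) F)) := by
  unfold DDm
  ext i j
  rw [Matrix.reindex_apply, Matrix.submatrix_apply]
  obtain ⟨p, hp⟩ : ∃ p, finSumFinEquiv p = i := ⟨_, finSumFinEquiv.apply_symm_apply i⟩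
  obtain ⟨q, hq⟩ : ∃ q, finSumFinEquiv q = j := ⟨_, finSumFinEquiv.apply_symm_apply j⟩
  subst hp hq
  rw [Equiv.symm_apply_apply, Equiv.symm_apply_apply]
  rcases p with a | c <;> rcases q with b | d
  · simp only [tMat, finSumFinEquiv_apply_left, Matrix.fromBlocks_apply₁₁,
      Matrix.diagonal_apply]
    refine if_congr ?_ ?_ rfl
    · rw [Fin.ext_iff, Fin.ext_iff, Fin.coe_castAdd, Fin.coe_castAdd]
    · rw [Fin.coe_castAdd]; congr 1; push_cast; ring
  · simp only [tMat, finSumFinEquiv_apply_left, finSumFinEquiv_apply_right,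
      Matrix.fromBlocks_apply₁₂, Matrix.zero_apply]
    refine Matrix.diagonal_apply_ne _ fun e => ?_
    rw [Fin.ext_iff, Fin.coe_castAdd, Fin.coe_natAdd] at e
    have := a.isLt
    omega
  · simp only [tMat, finSumFinEquiv_apply_left, finSumFinEquiv_apply_right,
      Matrix.fromBlocks_apply₂₁, Matrix.zero_apply]
    refine Matrix.diagonal_apply_ne _ fun e => ?_
    rw [Fin.ext_iff, Fin.coe_castAdd, Fin.coe_natAdd] at e
    have := b.isLt
    omega
  · have hc : c = 0 := Subsingleton.elim c 0
    have hd : d = 0 := Subsingleton.elim d 0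
    subst hc hd
    simp only [tMat, finSumFinEquiv_apply_right, Matrix.fromBlocks_apply₂₂,
      Matrix.one_apply_eq, Matrix.diagonal_apply_eq]
    rw [show (s * (((n+1 : ℕ):ℤ) - 1 - (((Fin.natAdd n (0 : Fin 1)):ℕ):ℤ))) = 0 by
      rw [Fin.coe_natAdd, Fin.val_zero]; push_cast; ring]
    exact zpow_zero ϖ

lemma blocks_glo (h : IsDVal v ϖ) {n : ℕ} (P P' : Matrix (Fin n) (Fin n) F)
    (q : Matrix (Fin n) (Fin 1) F)
    (hP : ∀ a b, 0 ≤ v (P a b)) (hP' : ∀ a b, 0 ≤ v (P' a b))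
    (hq : ∀ a c, 0 ≤ v (q a c))
    (h1 : P * P' = 1) (h2 : P' * P = 1) :
    Matrix.reindex finSumFinEquiv finSumFinEquiv
      (Matrix.fromBlocks P q 0 (1 : Matrix (Fin 1) (Fin 1) F)) ∈ GLO v (n+1) := by
  have key : ∀ (R : Matrix (Fin n) (Fin n) F) (w : Matrix (Fin n) (Fin 1) F),
      (∀ a b, 0 ≤ v (R a b)) → (∀ a c, 0 ≤ v (w a c)) →
      ∀ i j : Fin (n+1), 0 ≤ v ((Matrix.reindex finSumFinEquiv finSumFinEquiv
        (Matrix.fromBlocks R w 0 (1 : Matrix (Fin 1) (Fin 1) F))) i j) := by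
    intro R w hR hw i j
    rw [Matrix.reindex_apply, Matrix.submatrix_apply]
    rcases hp : finSumFinEquiv.symm i with a | c <;> rcases hq2 : finSumFinEquiv.symm j with b | d
    · rw [Matrix.fromBlocks_apply₁₁]; exact hR a b
    · rw [Matrix.fromBlocks_apply₁₂]; exact hw a d
    · rw [Matrix.fromBlocks_apply₂₁, Matrix.zero_apply, v_zero h]; exact le_top
    · rw [Matrix.fromBlocks_apply₂₂, Matrix.one_apply]
      split
      · rw [v_one h]
      · rw [v_zero h]; exact le_top
  have hq' : ∀ a c, 0 ≤ v ((-(P' * q)) a c) := by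
    intro a c
    rw [Matrix.neg_apply, v_neg h, Matrix.mul_apply]
    refine v_sum h _ _ _ fun k _ => ?_
    rw [h.2.1]
    exact add_nonneg (hP' a k) (hq k c)
  refine ⟨key P q hP hq, Matrix.reindex finSumFinEquiv finSumFinEquiv
    (Matrix.fromBlocks P' (-(P' * q)) 0 (1 : Matrix (Fin 1) (Fin 1) F)),
    key P' _ hP' hq', ?_, ?_⟩
  · rw [re_mul, Matrix.fromBlocks_multiply]
    have e1 : P * -(P' * q) + q * (1 : Matrix (Fin 1) (Fin 1) F) = 0 := by
      rw [Matrix.mul_neg, ← Matrix.mul_assoc, h1, Matrix.one_mul, Matrix.mul_one,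
        neg_add_cancel]
    have e2 : P * P' + q * (0 : Matrix (Fin 1) (Fin n) F) = 1 := by rw [Matrix.mul_zero, add_zero, h1]
    rw [e1, e2]
    have e3 : (0 : Matrix (Fin 1) (Fin n) F) * P' + (1 : Matrix (Fin 1) (Fin 1) F) * (0 : Matrix (Fin 1) (Fin n) F) = 0 := by
      simp
    have e4 : (0 : Matrix (Fin 1) (Fin n) F) * -(P' * q)
        + (1 : Matrix (Fin 1) (Fin 1) F) * 1 = 1 := by simp
    rw [e3, e4, Matrix.fromBlocks_one, re_one]
  · rw [re_mul, Matrix.fromBlocks_multiply]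
    have e1 : P' * q + -(P' * q) * (1 : Matrix (Fin 1) (Fin 1) F) = 0 := by
      rw [Matrix.mul_one, add_neg_cancel]
    have e2 : P' * P + -(P' * q) * (0 : Matrix (Fin 1) (Fin n) F) = 1 := by rw [Matrix.mul_zero, add_zero, h2]
    rw [e1, e2]
    have e3 : (0 : Matrix (Fin 1) (Fin n) F) * P + (1 : Matrix (Fin 1) (Fin 1) F) * (0 : Matrix (Fin 1) (Fin n) F) = 0 := by
      simp
    have e4 : (0 : Matrix (Fin 1) (Fin n) F) * q
        + (1 : Matrix (Fin 1) (Fin 1) F) * 1 = 1 := by simp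
    rw [e3, e4, Matrix.fromBlocks_one, re_one]

lemma partb (h : IsDVal v ϖ) (r : ℤ) (hr : 1 ≤ r) (ν : ℕ) :
    Kpar v ϖ ν (2*r) ∩ KparSq v ϖ ν r ⊆ KparAng v ϖ ν (r+1) := by
  rintro g ⟨⟨hglo, hconj⟩, _, hdiag⟩
  obtain ⟨hgint, g', hg'int, hgg', hg'g⟩ := hglo
  obtain ⟨hcint, c', hc'int, hcc', hc'c⟩ := hconj
  have hD : tMat ϖ ν (-(2*r)) * tMat ϖ ν (2*r) = 1 := by
    rw [tMat_mul h, show -(2*r) + 2*r = 0 by ring, tMat_zero]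
  have hDi : tMat ϖ ν (2*r) * tMat ϖ ν (-(2*r)) = 1 := by
    rw [tMat_mul h, show 2*r + -(2*r) = 0 by ring, tMat_zero]
  have hTT : (tMat ϖ ν (2*r) * g * tMat ϖ ν (-(2*r)))
      * (tMat ϖ ν (2*r) * g' * tMat ϖ ν (-(2*r))) = 1 :=
    conj_mul_one _ _ _ _ hD hDi hgg'
  have hc'eq : c' = tMat ϖ ν (2*r) * g' * tMat ϖ ν (-(2*r)) := by
    calc c' = c' * 1 := (Matrix.mul_one c').symm
      _ = c' * ((tMat ϖ ν (2*r) * g * tMat ϖ ν (-(2*r)))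
          * (tMat ϖ ν (2*r) * g' * tMat ϖ ν (-(2*r)))) := by rw [hTT]
      _ = (c' * (tMat ϖ ν (2*r) * g * tMat ϖ ν (-(2*r))))
          * (tMat ϖ ν (2*r) * g' * tMat ϖ ν (-(2*r))) := (Matrix.mul_assoc _ _ _).symm
      _ = tMat ϖ ν (2*r) * g' * tMat ϖ ν (-(2*r)) := by rw [hc'c, Matrix.one_mul]
  have Hg : ∀ a b : Fin ν, ((2*r*(((a:ℕ):ℤ) - ((b:ℕ):ℤ)) : ℤ) : WithTop ℤ) ≤ v (g a b) := by
    intro a b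
    have h0 := hcint a b
    rw [tgt_apply h] at h0
    have h1 := (v_elem h _ _ 0).1 (by exact_mod_cast h0)
    exact v_mono _ _ _ (le_of_eq (by ring)) h1
  have Hg' : ∀ a b : Fin ν, ((2*r*(((a:ℕ):ℤ) - ((b:ℕ):ℤ)) : ℤ) : WithTop ℤ) ≤ v (g' a b) := by
    intro a b
    have h0 := hc'int a b
    rw [hc'eq, tgt_apply h] at h0
    have h1 := (v_elem h _ _ 0).1 (by exact_mod_cast h0)
    exact v_mono _ _ _ (le_of_eq (by ring)) h1
  have key : ∀ (x : Matrix (Fin ν) (Fin ν) F),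
      (∀ a b, 0 ≤ v (x a b)) →
      (∀ a b : Fin ν, ((2*r*(((a:ℕ):ℤ) - ((b:ℕ):ℤ)) : ℤ) : WithTop ℤ) ≤ v (x a b)) →
      ∀ a b : Fin ν, 0 ≤ v ((tMat ϖ ν (r+1) * x * tMat ϖ ν (-(r+1))) a b) := by
    intro x hx0 hx2 a b
    rw [tgt_apply h]
    by_cases hab : (a:ℕ) ≤ (b:ℕ)
    · refine glo_entry h _ 0 _ ?_ (by rw [WithTop.coe_zero]; exact hx0 a b)
      have hab' : ((a:ℕ):ℤ) ≤ ((b:ℕ):ℤ) := by exact_mod_cast hab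
      nlinarith [hab', hr]
    · refine glo_entry h _ (2*r*(((a:ℕ):ℤ) - ((b:ℕ):ℤ))) _ ?_ (hx2 a b)
      have hab' : ((b:ℕ):ℤ) + 1 ≤ ((a:ℕ):ℤ) := by omega
      nlinarith [hab', hr]
  refine ⟨⟨⟨hgint, g', hg'int, hgg', hg'g⟩, ?_, ?_⟩, ?_⟩
  · exact key g hgint Hg
  · refine ⟨tMat ϖ ν (r+1) * g' * tMat ϖ ν (-(r+1)), key g' hg'int Hg', ?_, ?_⟩
    · exact conj_mul_one _ _ _ _
        (by rw [tMat_mul h, show -(r+1) + (r+1) = 0 by ring, tMat_zero])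
        (by rw [tMat_mul h, show (r+1) + -(r+1) = 0 by ring, tMat_zero]) hgg'
    · exact conj_mul_one _ _ _ _
        (by rw [tMat_mul h, show -(r+1) + (r+1) = 0 by ring, tMat_zero])
        (by rw [tMat_mul h, show (r+1) + -(r+1) = 0 by ring, tMat_zero]) hg'g
  · intro i
    refine v_mono _ _ _ (le_of_eq ?_) (hdiag i)
    rw [abs_of_pos (by omega : (0:ℤ) < r + 1), abs_of_pos (by omega : (0:ℤ) < r)]
    ring

end St11

/-- Equation (5.7): conjugates of `K_H^{(r)}` land in `K^{(2r)} ∩ K^{[r]} ⊆ K^{⟨r+1⟩}`. -/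
theorem statement11 {F : Type*} [Field F] (v : F → WithTop ℤ) (ϖ : F) (hval : IsDVal v ϖ)
    (n : ℕ) (hn : 1 ≤ n) (r : ℤ) (hr : 1 ≤ r) :
    (∀ h ∈ KH v ϖ n r,
      tMat ϖ n (-r) * h * tMat ϖ n r ∈ Kpar v ϖ n (2 * r) ∩ KparSq v ϖ n r ∧
      (mMat F n * tMat ϖ (n + 1) r)⁻¹ * dg1 h * (mMat F n * tMat ϖ (n + 1) r) ∈
        Kpar v ϖ (n + 1) (2 * r) ∩ KparSq v ϖ (n + 1) r) ∧
    ∀ ν : ℕ, 1 ≤ ν → Kpar v ϖ ν (2 * r) ∩ KparSq v ϖ ν r ⊆ KparAng v ϖ ν (r + 1) := by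
  constructor
  · intro h hh
    obtain ⟨⟨hhint, h', hh'int, hhh', hh'h⟩, hAint, hM1, hM2⟩ := hh
    rw [neg_neg] at hM2
    have hrev : ∀ a : Fin n, ((Fin.rev a : ℕ) : ℤ) = (n:ℤ) - 1 - ((a:ℕ):ℤ) := by
      intro a; rw [Fin.val_rev]; have := a.isLt; omega
    have H2 : ∀ a b : Fin n, ((r * (((b:ℕ):ℤ) - ((a:ℕ):ℤ)) : ℤ) : WithTop ℤ) ≤ v (h a b) := by
      intro a b
      have h0 := hAint a b
      rw [St11.tgt_apply hval] at h0
      rw [← WithTop.coe_zero] at h0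
      have h1 := (St11.v_elem hval _ _ 0).1 h0
      exact St11.v_mono _ _ _ (le_of_eq (by ring)) h1
    -- block form of the m-conjugation
    have hmulm : mMat F n * Matrix.reindex finSumFinEquiv finSumFinEquiv
        (Matrix.fromBlocks (wMat F n) (-(uCol F n)) 0 (1 : Matrix (Fin 1) (Fin 1) F)) = 1 := by
      rw [mMat, St11.re_mul, Matrix.fromBlocks_multiply]
      have e1 : wMat F n * wMat F n + uCol F n * (0 : Matrix (Fin 1) (Fin n) F) = 1 := by
        rw [St11.w_mul_w, Matrix.mul_zero, add_zero]
      have e2 : wMat F n * -(uCol F n) + uCol F n * (1 : Matrix (Fin 1) (Fin 1) F) = 0 := by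
        rw [Matrix.mul_neg, St11.w_mul_u, Matrix.mul_one, neg_add_cancel]
      have e3 : (0 : Matrix (Fin 1) (Fin n) F) * wMat F n
          + (1 : Matrix (Fin 1) (Fin 1) F) * (0 : Matrix (Fin 1) (Fin n) F) = 0 := by simp
      have e4 : (0 : Matrix (Fin 1) (Fin n) F) * -(uCol F n)
          + (1 : Matrix (Fin 1) (Fin 1) F) * 1 = 1 := by simp
      rw [e1, e2, e3, e4, Matrix.fromBlocks_one, St11.re_one]
    have hminv : (mMat F n)⁻¹ = Matrix.reindex finSumFinEquiv finSumFinEquiv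
        (Matrix.fromBlocks (wMat F n) (-(uCol F n)) 0 (1 : Matrix (Fin 1) (Fin 1) F)) :=
      Matrix.inv_eq_right_inv hmulm
    have tri : ∀ (A : Matrix (Fin n) (Fin n) F) (q : Matrix (Fin n) (Fin 1) F)
        (A' : Matrix (Fin n) (Fin n) F) (q' : Matrix (Fin n) (Fin 1) F),
        Matrix.fromBlocks A q 0 (1 : Matrix (Fin 1) (Fin 1) F)
            * Matrix.fromBlocks A' q' 0 (1 : Matrix (Fin 1) (Fin 1) F)
          = Matrix.fromBlocks (A * A') (A * q' + q) 0 (1 : Matrix (Fin 1) (Fin 1) F) := by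
      intro A q A' q'
      rw [Matrix.fromBlocks_multiply]
      have e1 : A * A' + q * (0 : Matrix (Fin 1) (Fin n) F) = A * A' := by
        rw [Matrix.mul_zero, add_zero]
      have e2 : A * q' + q * (1 : Matrix (Fin 1) (Fin 1) F) = A * q' + q := by
        rw [Matrix.mul_one]
      have e3 : (0 : Matrix (Fin 1) (Fin n) F) * A'
          + (1 : Matrix (Fin 1) (Fin 1) F) * (0 : Matrix (Fin 1) (Fin n) F) = 0 := by simp
      have e4 : (0 : Matrix (Fin 1) (Fin n) F) * q'
          + (1 : Matrix (Fin 1) (Fin 1) F) * 1 = 1 := by simp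
      rw [e1, e2, e3, e4]
    have hXform : (mMat F n)⁻¹ * dg1 h * mMat F n
        = Matrix.reindex finSumFinEquiv finSumFinEquiv
          (Matrix.fromBlocks (wMat F n * h * wMat F n)
            (wMat F n * h * uCol F n - uCol F n) 0 (1 : Matrix (Fin 1) (Fin 1) F)) := by
      rw [hminv, dg1, mMat, St11.re_mul, St11.re_mul, tri, tri, Matrix.mul_zero, zero_add,
        ← sub_eq_add_neg]
    have hXs : ∀ s s' : ℤ,
        tMat ϖ (n+1) s * ((mMat F n)⁻¹ * dg1 h * mMat F n) * tMat ϖ (n+1) s'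
        = Matrix.reindex finSumFinEquiv finSumFinEquiv
          (Matrix.fromBlocks (St11.DDm ϖ n s * (wMat F n * h * wMat F n) * St11.DDm ϖ n s')
            (St11.DDm ϖ n s * (wMat F n * h * uCol F n - uCol F n)) 0
            (1 : Matrix (Fin 1) (Fin 1) F)) := by
      intro s s'
      rw [hXform, St11.tMat_block, St11.tMat_block, St11.re_mul, St11.re_mul, tri, tri,
        add_zero, Matrix.mul_zero, zero_add]
    have hM2b := hM2
    rw [hXs (-r) r] at hM2b
    have hUL : ∀ a b : Fin n, 0 ≤ v ((St11.DDm ϖ n (-r)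
        * (wMat F n * h * wMat F n) * St11.DDm ϖ n r) a b) := by
      intro a b
      have h0 := hM2b.1 (finSumFinEquiv (Sum.inl a)) (finSumFinEquiv (Sum.inl b))
      rwa [Matrix.reindex_apply, Matrix.submatrix_apply, Equiv.symm_apply_apply,
        Equiv.symm_apply_apply, Matrix.fromBlocks_apply₁₁] at h0
    have hcrow : ∀ (a : Fin n) (d : Fin 1), (wMat F n * h * uCol F n - uCol F n) a d
        = (∑ k, h (Fin.rev a) k) - 1 := by
      intro a d
      rw [Matrix.sub_apply, St11.whu_apply]
      rfl
    have hCOL : ∀ (a : Fin n) (d : Fin 1), 0 ≤ v ((St11.DDm ϖ n (-r)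
        * (wMat F n * h * uCol F n - uCol F n)) a d) := by
      intro a d
      have h0 := hM2b.1 (finSumFinEquiv (Sum.inl a)) (finSumFinEquiv (Sum.inr d))
      rwa [Matrix.reindex_apply, Matrix.submatrix_apply, Equiv.symm_apply_apply,
        Equiv.symm_apply_apply, Matrix.fromBlocks_apply₁₂] at h0
    have H3 : ∀ a b : Fin n, ((r * (((a:ℕ):ℤ) - ((b:ℕ):ℤ)) : ℤ) : WithTop ℤ) ≤ v (h a b) := by
      intro a b
      have h0 := hUL (Fin.rev a) (Fin.rev b)
      rw [St11.dgd_apply hval, St11.whw_apply, Fin.rev_rev, Fin.rev_rev] at h0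
      rw [← WithTop.coe_zero] at h0
      have h1 := (St11.v_elem hval _ _ 0).1 h0
      refine St11.v_mono _ _ _ (le_of_eq ?_) h1
      rw [hrev a, hrev b]; ring
    have H4 : ∀ a : Fin n, ((r * (((a:ℕ):ℤ) + 1) : ℤ) : WithTop ℤ)
        ≤ v ((∑ k, h a k) - 1) := by
      intro a
      have h0 := hCOL (Fin.rev a) 0
      rw [St11.dq_apply, hcrow, Fin.rev_rev] at h0
      rw [← WithTop.coe_zero] at h0
      have h1 := (St11.v_elem hval _ _ 0).1 h0
      refine St11.v_mono _ _ _ (le_of_eq ?_) h1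
      rw [hrev a]; ring
    have Habs : ∀ a b : Fin n,
        ((r * |((a:ℕ):ℤ) - ((b:ℕ):ℤ)| : ℤ) : WithTop ℤ) ≤ v (h a b) := by
      intro a b
      rcases le_total ((a:ℕ):ℤ) ((b:ℕ):ℤ) with hab | hab
      · refine St11.v_mono _ _ _ (le_of_eq ?_) (H2 a b)
        rw [abs_of_nonpos (by omega)]; ring
      · refine St11.v_mono _ _ _ (le_of_eq ?_) (H3 a b)
        rw [abs_of_nonneg (by omega)]
    have H6 : ∀ a b : Fin n,
        ((r * |((a:ℕ):ℤ) - ((b:ℕ):ℤ)| : ℤ) : WithTop ℤ) ≤ v (h' a b) :=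
      St11.v_inv_bound hval r (by omega) h h' Habs hh'int hhh' hh'h
    have H2' : ∀ a b : Fin n,
        ((r * (((b:ℕ):ℤ) - ((a:ℕ):ℤ)) : ℤ) : WithTop ℤ) ≤ v (h' a b) := by
      intro a b
      refine St11.v_mono _ _ _ ?_ (H6 a b)
      have habs : ((b:ℕ):ℤ) - ((a:ℕ):ℤ) ≤ |((a:ℕ):ℤ) - ((b:ℕ):ℤ)| := by
        rw [abs_sub_comm]; exact le_abs_self _
      exact mul_le_mul_of_nonneg_left habs (by omega)
    have H3' : ∀ a b : Fin n,
        ((r * (((a:ℕ):ℤ) - ((b:ℕ):ℤ)) : ℤ) : WithTop ℤ) ≤ v (h' a b) := by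
      intro a b
      refine St11.v_mono _ _ _ ?_ (H6 a b)
      exact mul_le_mul_of_nonneg_left (le_abs_self _) (by omega)
    have H7 : ∀ a : Fin n, ((r : ℤ) : WithTop ℤ) ≤ v (h a a - 1) := by
      intro a
      have hsplit : h a a - 1 = ((∑ k, h a k) - 1)
          - (∑ k ∈ Finset.univ.erase a, h a k) := by
        rw [← Finset.add_sum_erase Finset.univ (h a) (Finset.mem_univ a)]
        ring
      rw [hsplit]
      refine St11.v_sub hval (St11.v_mono _ _ _ ?_ (H4 a)) ?_
      · nlinarith [show (0:ℤ) ≤ ((a:ℕ):ℤ) from Int.ofNat_nonneg _, hr]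
      · refine St11.v_sum hval _ _ _ fun k hk => ?_
        refine St11.v_mono _ _ _ ?_ (Habs a k)
        have hka : ((a:ℕ):ℤ) - ((k:ℕ):ℤ) ≠ 0 := by
          have h5 := (Finset.mem_erase.1 hk).1
          have h6 : (k:ℕ) ≠ (a:ℕ) := fun e => h5 (Fin.ext e)
          omega
        have h1 : (1:ℤ) ≤ |((a:ℕ):ℤ) - ((k:ℕ):ℤ)| := by
          have := abs_pos.mpr hka; omega
        nlinarith [h1, hr]
    have Hc0 : ∀ (a : Fin n) (d : Fin 1),
        0 ≤ v ((wMat F n * h * uCol F n - uCol F n) a d) := by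
      intro a d
      rw [hcrow]
      refine St11.v_sub hval (St11.v_sum hval _ _ _ fun k _ => hhint _ _) (St11.v_one hval).ge
    have hDf : tMat ϖ n r * tMat ϖ n (-r) = 1 := by
      rw [St11.tMat_mul hval, show r + -r = 0 by ring, St11.tMat_zero]
    have hDb : tMat ϖ n (-r) * tMat ϖ n r = 1 := by
      rw [St11.tMat_mul hval, show -r + r = 0 by ring, St11.tMat_zero]
    have collapse : ∀ (s1 s2 s3 s4 : ℤ) (g : Matrix (Fin n) (Fin n) F),
        tMat ϖ n s1 * (tMat ϖ n s2 * g * tMat ϖ n s3) * tMat ϖ n s4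
          = tMat ϖ n (s1+s2) * g * tMat ϖ n (s3+s4) := by
      intro s1 s2 s3 s4 g
      simp only [← Matrix.mul_assoc]
      rw [St11.tMat_mul hval, Matrix.mul_assoc (tMat ϖ n (s1+s2) * g), St11.tMat_mul hval]
    have collapse1 : ∀ (s1 s2 s3 s4 : ℤ) (g : Matrix (Fin (n+1)) (Fin (n+1)) F),
        tMat ϖ (n+1) s1 * (tMat ϖ (n+1) s2 * g * tMat ϖ (n+1) s3) * tMat ϖ (n+1) s4
          = tMat ϖ (n+1) (s1+s2) * g * tMat ϖ (n+1) (s3+s4) := by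
      intro s1 s2 s3 s4 g
      simp only [← Matrix.mul_assoc]
      rw [St11.tMat_mul hval, Matrix.mul_assoc (tMat ϖ (n+1) (s1+s2) * g),
        St11.tMat_mul hval]
    have hAGLO : (tMat ϖ n (-r) * h * tMat ϖ n r) ∈ GLO v n := by
      refine ⟨hAint, tMat ϖ n (-r) * h' * tMat ϖ n r, ?_, ?_, ?_⟩
      · intro a b
        rw [St11.tgt_apply hval]
        exact St11.glo_entry hval _ _ _ (le_of_eq (by ring)) (H2' a b)
      · exact St11.conj_mul_one _ _ _ _ hDf hDb hhh'
      · exact St11.conj_mul_one _ _ _ _ hDf hDb hh'h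
    constructor
    · -- part (a1)
      refine ⟨⟨hAGLO, ?_⟩, ⟨hAGLO, ?_⟩, ?_⟩
      · -- 2r conjugate
        have hg1 : tMat ϖ n (2*r) * (tMat ϖ n (-r) * h * tMat ϖ n r) * tMat ϖ n (-(2*r))
            = tMat ϖ n r * h * tMat ϖ n (-r) := by
          rw [collapse, show 2*r + -r = r by ring, show r + -(2*r) = -r by ring]
        rw [hg1]
        refine ⟨?_, tMat ϖ n r * h' * tMat ϖ n (-r), ?_, ?_, ?_⟩
        · intro a b
          rw [St11.tgt_apply hval]
          exact St11.glo_entry hval _ _ _ (le_of_eq (by ring)) (H3 a b)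
        · intro a b
          rw [St11.tgt_apply hval]
          exact St11.glo_entry hval _ _ _ (le_of_eq (by ring)) (H3' a b)
        · exact St11.conj_mul_one _ _ _ _ hDb hDf hhh'
        · exact St11.conj_mul_one _ _ _ _ hDb hDf hh'h
      · -- r conjugate (for KparSq)
        have hg1 : tMat ϖ n r * (tMat ϖ n (-r) * h * tMat ϖ n r) * tMat ϖ n (-r)
            = h := by
          rw [collapse, show r + -r = 0 by ring, St11.tMat_zero, Matrix.one_mul,
            Matrix.mul_one]
        rw [hg1]
        exact ⟨hhint, h', hh'int, hhh', hh'h⟩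
      · -- diagonal
        intro a
        rw [St11.tgt_apply hval,
          show ((-r) * ((n:ℤ) - 1 - ((a:ℕ):ℤ)) + r * ((n:ℤ) - 1 - ((a:ℕ):ℤ))) = 0 by ring,
          zpow_zero, one_mul, show |r| = r from abs_of_pos (by omega)]
        exact H7 a
    · -- part (a2)
      have hN1 : (mMat F n * tMat ϖ (n + 1) r)⁻¹ * dg1 h * (mMat F n * tMat ϖ (n + 1) r)
          = tMat ϖ (n+1) (-r) * ((mMat F n)⁻¹ * dg1 h * mMat F n) * tMat ϖ (n+1) r := by
        rw [Matrix.mul_inv_rev, St11.tMat_inv hval]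
        simp only [Matrix.mul_assoc]
      rw [hN1]
      have hDD1 : St11.DDm ϖ n (-r) * St11.DDm ϖ n r = 1 := by
        rw [St11.DDm_mul hval, show -r + r = 0 by ring, St11.DDm_zero]
      have hDD2 : St11.DDm ϖ n r * St11.DDm ϖ n (-r) = 1 := by
        rw [St11.DDm_mul hval, show r + -r = 0 by ring, St11.DDm_zero]
      have hWW : (wMat F n * h * wMat F n) * (wMat F n * h' * wMat F n) = 1 :=
        St11.conj_mul_one _ _ _ _ (St11.w_mul_w n) (St11.w_mul_w n) hhh'
      have hWW' : (wMat F n * h' * wMat F n) * (wMat F n * h * wMat F n) = 1 :=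
        St11.conj_mul_one _ _ _ _ (St11.w_mul_w n) (St11.w_mul_w n) hh'h
      refine ⟨⟨hM2, ?_⟩, ⟨hM2, ?_⟩, ?_⟩
      · -- 2r conjugate
        have hg1 : tMat ϖ (n+1) (2*r)
              * (tMat ϖ (n+1) (-r) * ((mMat F n)⁻¹ * dg1 h * mMat F n) * tMat ϖ (n+1) r)
              * tMat ϖ (n+1) (-(2*r))
            = tMat ϖ (n+1) r * ((mMat F n)⁻¹ * dg1 h * mMat F n) * tMat ϖ (n+1) (-r) := by
          rw [collapse1, show 2*r + -r = r by ring, show r + -(2*r) = -r by ring]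
        rw [hg1, hXs r (-r)]
        refine St11.blocks_glo hval _
          (St11.DDm ϖ n r * (wMat F n * h' * wMat F n) * St11.DDm ϖ n (-r)) _
          ?_ ?_ ?_ ?_ ?_
        · intro a b
          rw [St11.dgd_apply hval, St11.whw_apply]
          refine St11.glo_entry hval _ _ _ ?_ (H2 (Fin.rev a) (Fin.rev b))
          rw [hrev a, hrev b]
          exact le_of_eq (by ring)
        · intro a b
          rw [St11.dgd_apply hval, St11.whw_apply]
          refine St11.glo_entry hval _ _ _ ?_ (H2' (Fin.rev a) (Fin.rev b))
          rw [hrev a, hrev b]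
          exact le_of_eq (by ring)
        · intro a d
          rw [St11.dq_apply]
          refine St11.glo_entry hval _ 0 _ ?_
            (by rw [WithTop.coe_zero]; exact Hc0 a d)
          have := a.isLt
          have h5 : ((a:ℕ):ℤ) < (n:ℤ) := by exact_mod_cast this
          nlinarith [h5, hr]
        · exact St11.conj_mul_one _ _ _ _ hDD1 hDD2 hWW
        · exact St11.conj_mul_one _ _ _ _ hDD1 hDD2 hWW'
      · -- r conjugate
        have hg1 : tMat ϖ (n+1) r
              * (tMat ϖ (n+1) (-r) * ((mMat F n)⁻¹ * dg1 h * mMat F n) * tMat ϖ (n+1) r)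
              * tMat ϖ (n+1) (-r)
            = (mMat F n)⁻¹ * dg1 h * mMat F n := by
          rw [collapse1, show r + -r = 0 by ring, St11.tMat_zero, Matrix.one_mul,
            Matrix.mul_one]
        rw [hg1]
        exact hM1
      · -- diagonal
        intro i
        rw [hXs (-r) r]
        obtain ⟨p, hp⟩ : ∃ p, finSumFinEquiv p = i := ⟨_, finSumFinEquiv.apply_symm_apply i⟩
        subst hp
        rw [Matrix.reindex_apply, Matrix.submatrix_apply, Equiv.symm_apply_apply]
        rcases p with a | c
        · rw [Matrix.fromBlocks_apply₁₁, St11.dgd_apply hval, St11.whw_apply,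
            show ((-r) * ((n:ℤ) - ((a:ℕ):ℤ)) + r * ((n:ℤ) - ((a:ℕ):ℤ))) = 0 by ring,
            zpow_zero, one_mul, show |r| = r from abs_of_pos (by omega)]
          exact H7 _
        · rw [Matrix.fromBlocks_apply₂₂, Matrix.one_apply_eq, sub_self, St11.v_zero hval]
          exact le_top
  · intro ν _
    exact St11.partb hval r hr ν
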